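/- Let T : A → B be a linear map between C*-algebras that preserves cubes (T(aa*a) = Ta(Ta)*Ta for all a). If a, b ∈ A satisfy a*b = ab* = 0, then (Ta)*(Tb) = (Ta)(Tb)* = 0; that is, every triple homomorphism is disjointness preserving. -/

import Mathlib

lemma cube_expand {R : Type*} [Ring R] [StarRing R] [Module ℂ R] [StarModule ℂ R]
    [IsScalarTower ℂ R R] [SMulCommClass ℂ R R] (x y : R) (l : ℂ) :
    (l • x + y) * star (l • x + y) * (l • x + y) =
      (l * (starRingEnd ℂ) l * l) • (x * star x * x)
      + (l * (starRingEnd ℂ) l) • (x * star x * y)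
      + (l * l) • (x * star y * x)
      + l • (x * star y * y)
      + (l * (starRingEnd ℂ) l) • (y * star x * x)
      + ((starRingEnd ℂ) l) • (y * star x * y)
      + l • (y * star y * x)
      + y * star y * y := by
  simp only [star_add, star_smul, starRingEnd_apply, mul_add, add_mul, smul_mul_assoc,
    mul_smul_comm, smul_smul]
  module

lemma aux_zero_of_neg {B : Type*} [CStarAlgebra B] [PartialOrder B] [StarOrderedRing B]
    {c p q : B} (hp : 0 ≤ p) (hq : 0 ≤ q) (h : star c * c = -(p * q)) : c = 0 := by
  nontriviality B
  have hz : (0:B) ≤ star c * c := star_mul_self_nonneg c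
  by_contra hc
  have hne : ‖star c * c‖ ≠ 0 := by
    simp only [ne_eq, norm_eq_zero, CStarRing.star_mul_self_eq_zero_iff]
    exact hc
  have hmem : ‖star c * c‖ ∈ spectrum ℝ (star c * c) :=
    CStarAlgebra.norm_mem_spectrum_of_nonneg hz
  have hmem' : -‖star c * c‖ ∈ spectrum ℝ (p * q) := by
    have hpq : p * q = -(star c * c) := by rw [h, neg_neg]
    rw [hpq, ← spectrum.neg_eq]
    exact Set.neg_mem_neg.mpr hmem
  set s := CFC.sqrt p with hs
  have hs0 : (0:B) ≤ s := CFC.sqrt_nonneg p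
  have hss : s * s = p := CFC.sqrt_mul_sqrt_self p hp
  have hsa : star s = s := (IsSelfAdjoint.of_nonneg hs0).star_eq
  have hconj : (0:B) ≤ s * q * s := by
    calc (0:B) ≤ star s * q * s := star_left_conjugate_nonneg hq s
    _ = s * q * s := by rw [hsa]
  have hmem2 : -‖star c * c‖ ∈ spectrum ℝ (s * (q * s)) := by
    have hd : -‖star c * c‖ ∈ spectrum ℝ (s * (s * q)) \ {0} := by
      refine ⟨?_, by simpa using hne⟩
      rwa [← mul_assoc, hss]
    rw [spectrum.nonzero_mul_comm] at hd
    simpa [mul_assoc] using hd.1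
  have := spectrum_nonneg_of_nonneg hconj (by rwa [← mul_assoc] at hmem2)
  have := norm_nonneg (star c * c)
  have : ‖star c * c‖ = 0 := le_antisymm (by linarith) (by linarith)
  exact hne this

/-- Every cube-preserving (hence triple-preserving) linear map between
C*-algebras is disjointness preserving. -/
theorem triple_hom_disjointness_preserving
    {A B : Type*} [NormedRing A] [StarRing A] [CStarRing A]
    [NormedAlgebra ℂ A] [StarModule ℂ A] [CompleteSpace A]
    [NormedRing B] [StarRing B] [CStarRing B]
    [NormedAlgebra ℂ B] [StarModule ℂ B] [CompleteSpace B]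
    (T : A →ₗ[ℂ] B) (hT : ∀ a : A, T (a * star a * a) = T a * star (T a) * T a)
    (a b : A) (h1 : star a * b = 0) (h2 : a * star b = 0) :
    star (T a) * T b = 0 ∧ T a * star (T b) = 0 := by
  letI : CStarAlgebra B := ⟨⟩
  letI : PartialOrder B := CStarAlgebra.spectralOrder B
  haveI : StarOrderedRing B := CStarAlgebra.spectralOrderedRing B
  have h1' : star b * a = 0 := by
    have := congrArg star h1
    simpa [star_mul] using this
  have h2' : b * star a = 0 := by
    have := congrArg star h2
    simpa [star_mul] using this
  set x := T a with hx
  set y := T b with hy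
  -- cube of `l • a + b` collapses by disjointness
  have hA : ∀ l : ℂ, (l • a + b) * star (l • a + b) * (l • a + b) =
      (l * (starRingEnd ℂ) l * l) • (a * star a * a) + b * star b * b := by
    intro l
    rw [cube_expand]
    have e1 : a * star a * b = 0 := by rw [mul_assoc, h1, mul_zero]
    have e2 : a * star b * a = 0 := by rw [h2, zero_mul]
    have e3 : a * star b * b = 0 := by rw [h2, zero_mul]
    have e4 : b * star a * a = 0 := by rw [h2', zero_mul]
    have e5 : b * star a * b = 0 := by rw [h2', zero_mul]
    have e6 : b * star b * a = 0 := by rw [mul_assoc, h1', mul_zero]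
    rw [e1, e2, e3, e4, e5, e6]
    simp
  -- apply T and the cube identity
  have key : ∀ l : ℂ,
      (l * (starRingEnd ℂ) l) • (x * star x * y)
      + (l * l) • (x * star y * x)
      + l • (x * star y * y)
      + (l * (starRingEnd ℂ) l) • (y * star x * x)
      + ((starRingEnd ℂ) l) • (y * star x * y)
      + l • (y * star y * x) = 0 := by
    intro l
    have e := hT (l • a + b)
    rw [hA l, map_add, map_smul, hT a, hT b, map_add, map_smul, ← hx, ← hy,
      cube_expand] at e
    linear_combination (norm := module) - e
  have kP : x * star x * y + y * star x * x = 0 := by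
    have k1 := key 1
    have k2 := key (-1)
    have k3 := key Complex.I
    have k4 := key (-Complex.I)
    simp only [map_one, map_neg, Complex.conj_I, mul_one, one_mul, mul_neg, neg_mul,
      Complex.I_mul_I, neg_neg, one_smul, neg_smul] at k1 k2 k3 k4
    linear_combination (norm := module) ((4:ℂ))⁻¹ • k1 + ((4:ℂ))⁻¹ • k2
      + ((4:ℂ))⁻¹ • k3 + ((4:ℂ))⁻¹ • k4
  constructor
  · have hstar : star (star x * y) * (star x * y) =
        -((star y * y) * (star x * x)) := by
      have : x * star x * y = -(y * star x * x) := by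
        rw [eq_neg_iff_add_eq_zero]; exact kP
      calc star (star x * y) * (star x * y) = star y * (x * star x * y) := by
            simp [star_mul, mul_assoc]
        _ = -((star y * y) * (star x * x)) := by
            rw [this]; simp [mul_assoc]
    exact aux_zero_of_neg (star_mul_self_nonneg y) (star_mul_self_nonneg x) hstar
  · have hstar : star (x * star y) * (x * star y) =
        -((x * star x) * (y * star y)) := by
      have : y * star x * x = -(x * star x * y) := by
        rw [eq_neg_iff_add_eq_zero, add_comm]; exact kP
      calc star (x * star y) * (x * star y) = (y * star x * x) * star y := by
            simp [star_mul, mul_assoc]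
        _ = -((x * star x) * (y * star y)) := by
            rw [this]; simp [mul_assoc]
    exact aux_zero_of_neg (mul_star_self_nonneg x) (mul_star_self_nonneg y) hstar
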